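/- arXiv:2601.16385 — 2 statements merged into one kernel-verified Lean document; each statement's English description precedes it below -/
import Mathlib

section
/- Let H be a separable real Hilbert space and let ε_1, …, ε_n be i.i.d. random elements of H with E[ε_1] = 0 and E‖ε_1‖⁴ < ∞. Set τ1 = E‖ε_1‖², τ2 = E[⟨ε_1, ε_2⟩²] (a second moment of the inner product of two independent copies), and τ3 = E‖ε_1‖⁴. Then for any matrix P ∈ ℝ^{n×n}, the quadratic form V = ∑_{i,j=1}^n P_{ij} ⟨ε_i, ε_j⟩ satisfies Var(V) = τ2 · trace(P(P + Pᵀ)) + (τ3 − τ1² − 2τ2) · ∑_{i=1}^n P_{ii}². -/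
open scoped RealInnerProductSpace
open MeasureTheory ProbabilityTheory Matrix

section Helpers

variable {H : Type*} [NormedAddCommGroup H] [InnerProductSpace ℝ H] [CompleteSpace H]
    [SecondCountableTopology H] [MeasurableSpace H] [BorelSpace H]
    {Ω : Type*} [MeasurableSpace Ω] {μ : Measure Ω} [IsProbabilityMeasure μ]

theorem integral_inner_of_indepFun
    {X Y : Ω → H} (hXm : AEMeasurable X μ) (hYm : AEMeasurable Y μ)
    (hXi : Integrable X μ) (hYi : Integrable Y μ) (h : IndepFun X Y μ) :
    ∫ ω, ⟪X ω, Y ω⟫ ∂μ = ⟪∫ ω, X ω ∂μ, ∫ ω, Y ω ∂μ⟫ := by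
  have hmap := (indepFun_iff_map_prod_eq_prod_map_map hXm hYm).mp h
  have hmeasp : AEStronglyMeasurable (fun p : H × H => ⟪p.1, p.2⟫)
      (Measure.map (fun ω => (X ω, Y ω)) μ) :=
    (measurable_fst.inner measurable_snd).aestronglyMeasurable
  have h1 : ∫ ω, ⟪X ω, Y ω⟫ ∂μ
      = ∫ p : H × H, ⟪p.1, p.2⟫ ∂(Measure.map (fun ω => (X ω, Y ω)) μ) :=
    (integral_map (hXm.prodMk hYm) hmeasp).symm
  have hXid : Integrable (fun x : H => x) (μ.map X) :=
    (integrable_map_measure aestronglyMeasurable_id hXm).mpr hXi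
  have hYid : Integrable (fun x : H => x) (μ.map Y) :=
    (integrable_map_measure aestronglyMeasurable_id hYm).mpr hYi
  have hXint : ∫ x : H, x ∂(μ.map X) = ∫ ω, X ω ∂μ :=
    integral_map hXm aestronglyMeasurable_id
  have hYint : ∫ x : H, x ∂(μ.map Y) = ∫ ω, Y ω ∂μ :=
    integral_map hYm aestronglyMeasurable_id
  have hprodint : Integrable (fun p : H × H => ⟪p.1, p.2⟫) ((μ.map X).prod (μ.map Y)) := by
    have hb : Integrable (fun p : H × H => ‖p.1‖ * ‖p.2‖) ((μ.map X).prod (μ.map Y)) :=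
      Integrable.mul_prod hXid.norm hYid.norm
    refine hb.mono' ((measurable_fst.inner measurable_snd).aestronglyMeasurable) ?_
    filter_upwards with p
    simpa using abs_real_inner_le_norm p.1 p.2
  rw [h1, hmap, MeasureTheory.integral_prod _ hprodint]
  have h3 : ∀ x : H, ∫ y : H, ⟪x, y⟫ ∂(μ.map Y) = ⟪x, ∫ ω, Y ω ∂μ⟫ := fun x => by
    rw [← hYint]; exact integral_inner hYid x
  simp_rw [h3]
  have h2 : ∀ x : H, ⟪x, ∫ ω, Y ω ∂μ⟫ = ⟪(∫ ω, Y ω ∂μ : H), x⟫ := fun x => real_inner_comm _ _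
  simp_rw [h2]
  rw [integral_inner hXid, hXint, real_inner_comm]

theorem pair_identDistrib
    {ε : ℕ → Ω → H} (hmeas : ∀ i, Measurable (ε i))
    (hindep : iIndepFun ε μ)
    (hident : ∀ i, IdentDistrib (ε i) (ε 0) μ μ)
    {i j : ℕ} (hij : i ≠ j) :
    IdentDistrib (fun ω => (ε i ω, ε j ω)) (fun ω => (ε 0 ω, ε 1 ω)) μ μ := by
  have h1 := (indepFun_iff_map_prod_eq_prod_map_map (hmeas i).aemeasurable
    (hmeas j).aemeasurable).mp (hindep.indepFun hij)
  have h2 := (indepFun_iff_map_prod_eq_prod_map_map (hmeas 0).aemeasurable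
    (hmeas 1).aemeasurable).mp (hindep.indepFun (by norm_num : (0:ℕ) ≠ 1))
  refine ⟨((hmeas i).prodMk (hmeas j)).aemeasurable,
    ((hmeas 0).prodMk (hmeas 1)).aemeasurable, ?_⟩
  rw [h1, h2, (hident i).map_eq, (hident j).map_eq, (hident 0).map_eq, (hident 1).map_eq]

end Helpers

lemma alg_step {n : ℕ} (P : Matrix (Fin n) (Fin n) ℝ) (τ1 τ2 τ3 : ℝ) :
    (∑ i, ∑ j, ∑ k, ∑ l, P i j * P k l *
      (τ1^2 * ((if i = j then (1:ℝ) else 0) * (if k = l then (1:ℝ) else 0))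
        + τ2 * ((if i = k then (1:ℝ) else 0) * (if j = l then (1:ℝ) else 0)
              + (if i = l then (1:ℝ) else 0) * (if j = k then (1:ℝ) else 0))
        + (τ3 - τ1^2 - 2*τ2) * ((if i = j then (1:ℝ) else 0) * (if j = k then (1:ℝ) else 0)
              * (if k = l then (1:ℝ) else 0))))
     - (τ1 * ∑ i, P i i)^2
    = τ2 * Matrix.trace (P * (P + Pᵀ)) + (τ3 - τ1^2 - 2*τ2) * ∑ i, P i i ^ 2 := by
  have htr : Matrix.trace (P * (P + Pᵀ)) = ∑ i, ∑ j, (P i j * P j i + P i j * P i j) := by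
    simp [Matrix.trace, Matrix.mul_apply, Matrix.diag, Matrix.transpose_apply, mul_add,
      Finset.sum_add_distrib]
  rw [htr]
  simp only [mul_add, add_mul, mul_ite, ite_mul, one_mul, mul_one, zero_mul, mul_zero,
    Finset.sum_add_distrib, Finset.sum_ite_eq, Finset.sum_ite_eq', Finset.mem_univ, if_true,
    Finset.sum_ite_irrel, Finset.sum_const_zero]
  have h1 : (τ1 * ∑ i, P i i)^2 = ∑ x : Fin n, ∑ y : Fin n, P x x * P y y * τ1^2 := by
    rw [show (τ1 * ∑ i, P i i)^2 = τ1^2 * ((∑ i, P i i) * (∑ i, P i i)) by ring,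
      Finset.sum_mul_sum, Finset.mul_sum]
    refine Finset.sum_congr rfl fun x _ => ?_
    rw [Finset.mul_sum]
    exact Finset.sum_congr rfl fun y _ => by ring
  rw [h1]
  have h2 : ∀ A B C D : ℝ, A + (B + C) + D - A = B + C + D := fun A B C D => by ring
  rw [h2]
  simp only [Finset.mul_sum, mul_add, Finset.sum_add_distrib, pow_two]
  rw [add_comm (∑ x : Fin n, ∑ y : Fin n, P x y * P x y * τ2)]
  congr 1
  · congr 1
    · exact Finset.sum_congr rfl fun x _ => Finset.sum_congr rfl fun y _ => by ring
    · exact Finset.sum_congr rfl fun x _ => Finset.sum_congr rfl fun y _ => by ring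
  · exact Finset.sum_congr rfl fun x _ => by ring

/-- Variance of a Hilbert-valued quadratic form. For i.i.d. mean-zero `H`-valued random
elements `ε 0, ε 1, …` with `E‖ε‖⁴ < ∞`, setting `τ1 = E‖ε‖²`, `τ2 = E⟪ε, ε'⟫²` (two
independent copies) and `τ3 = E‖ε‖⁴`, the quadratic form
`V = ∑_{i,j<n} P_{ij} ⟪ε i, ε j⟫` satisfies
`Var(V) = τ2·trace(P(P+Pᵀ)) + (τ3 − τ1² − 2τ2)·∑ᵢ P_{ii}²`. -/
theorem variance_of_quadratic_form
    {H : Type*} [NormedAddCommGroup H] [InnerProductSpace ℝ H] [CompleteSpace H]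
    [SecondCountableTopology H] [MeasurableSpace H] [BorelSpace H]
    {Ω : Type*} [MeasurableSpace Ω] (μ : Measure Ω) [IsProbabilityMeasure μ]
    (ε : ℕ → Ω → H)
    (hmeas : ∀ i, Measurable (ε i))
    (hindep : iIndepFun ε μ)
    (hident : ∀ i, IdentDistrib (ε i) (ε 0) μ μ)
    (hint : Integrable (ε 0) μ)
    (hmean : ∫ ω, ε 0 ω ∂μ = 0)
    (hfourth : Integrable (fun ω => ‖ε 0 ω‖ ^ 4) μ)
    (τ1 τ2 τ3 : ℝ)
    (hτ1 : τ1 = ∫ ω, ‖ε 0 ω‖ ^ 2 ∂μ)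
    (hτ2 : τ2 = ∫ ω, ⟪ε 0 ω, ε 1 ω⟫ ^ 2 ∂μ)
    (hτ3 : τ3 = ∫ ω, ‖ε 0 ω‖ ^ 4 ∂μ)
    (n : ℕ) (P : Matrix (Fin n) (Fin n) ℝ)
    (V : Ω → ℝ) (hV : ∀ ω, V ω = ∑ i, ∑ j, P i j * ⟪ε i ω, ε j ω⟫) :
    (∫ ω, V ω ^ 2 ∂μ) - (∫ ω, V ω ∂μ) ^ 2
      = τ2 * Matrix.trace (P * (P + Pᵀ)) + (τ3 - τ1 ^ 2 - 2 * τ2) * ∑ i, P i i ^ 2 := by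
  classical
  -- basic facts
  have hmeasA : ∀ i : ℕ, AEMeasurable (ε i) μ := fun i => (hmeas i).aemeasurable
  have hIntε : ∀ i : ℕ, Integrable (ε i) μ := fun i => (hident i).integrable_iff.mpr hint
  have hmean' : ∀ i : ℕ, ∫ ω, ε i ω ∂μ = 0 := fun i => ((hident i).integral_eq).trans hmean
  have h4 : ∀ i : ℕ, Integrable (fun ω => ‖ε i ω‖ ^ 4) μ := fun i =>
    ((hident i).comp (measurable_norm.pow_const 4)).integrable_iff.mpr hfourth
  have hpow : ∀ (i : ℕ) (p : ℕ), p ≤ 4 → Integrable (fun ω => ‖ε i ω‖ ^ p) μ := by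
    intro i p hp
    refine ((integrable_const (1:ℝ)).add (h4 i)).mono'
      (((hmeas i).norm.pow_const p).aestronglyMeasurable) ?_
    filter_upwards with ω
    have h0 : (0:ℝ) ≤ ‖ε i ω‖ := norm_nonneg _
    rw [Real.norm_eq_abs, abs_of_nonneg (pow_nonneg h0 _)]
    simp only [Pi.add_apply]
    rcases le_total (‖ε i ω‖) 1 with h | h
    · have h1 : ‖ε i ω‖ ^ p ≤ 1 := pow_le_one₀ h0 h
      have h2 : (0:ℝ) ≤ ‖ε i ω‖ ^ 4 := pow_nonneg h0 _
      linarith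
    · have h1 : ‖ε i ω‖ ^ p ≤ ‖ε i ω‖ ^ 4 := pow_le_pow_right₀ h hp
      linarith
  have hnormsq : ∀ i : ℕ, ∫ ω, ‖ε i ω‖ ^ 2 ∂μ = τ1 := fun i =>
    (((hident i).comp (measurable_norm.pow_const 2)).integral_eq).trans hτ1.symm
  have hnorm4 : ∀ i : ℕ, ∫ ω, ‖ε i ω‖ ^ 4 ∂μ = τ3 := fun i =>
    (((hident i).comp (measurable_norm.pow_const 4)).integral_eq).trans hτ3.symm
  -- first mixed moment
  have hm1 : ∀ i j : ℕ, i ≠ j → ∫ ω, ⟪ε i ω, ε j ω⟫ ∂μ = 0 := by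
    intro i j hij
    rw [integral_inner_of_indepFun (hmeasA i) (hmeasA j) (hIntε i) (hIntε j)
      (hindep.indepFun hij), hmean' i, inner_zero_left]
  have hdiag : ∀ i : ℕ, ∫ ω, ⟪ε i ω, ε i ω⟫ ∂μ = τ1 := by
    intro i
    simp_rw [real_inner_self_eq_norm_sq]
    exact hnormsq i
  -- the generic "one lonely factor" vanishing lemma
  have hz : ∀ (a : ℕ) (W : Ω → H), AEMeasurable W μ → Integrable W μ →
      IndepFun (ε a) W μ → ∫ ω, ⟪ε a ω, W ω⟫ ∂μ = 0 := by
    intro a W hWm hWi hind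
    rw [integral_inner_of_indepFun (hmeasA a) hWm (hIntε a) hWi hind, hmean' a, inner_zero_left]
  -- integrable products of norms
  have hprodnorm : ∀ b c : ℕ, b ≠ c → Integrable (fun ω => ‖ε b ω‖ ^ 2 * ‖ε c ω‖) μ := by
    intro b c hbc
    have hind : IndepFun (fun ω => ‖ε b ω‖ ^ 2) (fun ω => ‖ε c ω‖ ^ 1) μ :=
      (hindep.indepFun hbc).comp (measurable_norm.pow_const 2) (measurable_norm.pow_const 1)
    have := hind.integrable_mul (hpow b 2 (by norm_num)) (hpow c 1 (by norm_num))
    simpa [pow_one, Pi.mul_def] using this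
  -- integrability of the W's
  have hW1 : ∀ b c : ℕ, b ≠ c → Integrable (fun ω => ⟪ε b ω, ε c ω⟫ • ε b ω) μ := by
    intro b c hbc
    refine (hprodnorm b c hbc).mono'
      ((((hmeas b).inner (hmeas c)).smul (hmeas b)).aestronglyMeasurable) ?_
    filter_upwards with ω
    rw [norm_smul]
    have h1 : ‖⟪ε b ω, ε c ω⟫‖ ≤ ‖ε b ω‖ * ‖ε c ω‖ := norm_inner_le_norm _ _
    have h2 : (0:ℝ) ≤ ‖ε b ω‖ := norm_nonneg _
    calc ‖⟪ε b ω, ε c ω⟫‖ * ‖ε b ω‖ ≤ (‖ε b ω‖ * ‖ε c ω‖) * ‖ε b ω‖ := by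
          exact mul_le_mul_of_nonneg_right h1 h2
      _ = ‖ε b ω‖ ^ 2 * ‖ε c ω‖ := by ring
  have hW2 : ∀ b c : ℕ, b ≠ c → Integrable (fun ω => (‖ε b ω‖ ^ 2) • ε c ω) μ := by
    intro b c hbc
    have hbc' : c ≠ b := hbc.symm
    refine (hprodnorm b c hbc).mono'
      ((((hmeas b).norm.pow_const 2).smul (hmeas c)).aestronglyMeasurable) ?_
    filter_upwards with ω
    rw [norm_smul]
    simp [abs_of_nonneg (pow_nonneg (norm_nonneg _) 2)]
  have hW3 : ∀ b : ℕ, Integrable (fun ω => (‖ε b ω‖ ^ 2) • ε b ω) μ := by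
    intro b
    refine (hpow b 3 (by norm_num)).mono'
      ((((hmeas b).norm.pow_const 2).smul (hmeas b)).aestronglyMeasurable) ?_
    filter_upwards with ω
    rw [norm_smul, Real.norm_eq_abs, abs_of_nonneg (pow_nonneg (norm_nonneg _) 2)]
    exact le_of_eq (pow_succ _ 2).symm
  -- independence of ε a from two-variable functionals
  have hindW2 : ∀ (a b c : ℕ) (g : H × H → H), Measurable g → b ≠ a → c ≠ a →
      IndepFun (ε a) (fun ω => g (ε b ω, ε c ω)) μ := by
    intro a b c g hg hba hca
    exact ((hindep.indepFun_prodMk hmeas b c a hba hca).comp hg measurable_id).symm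
  have hindW1 : ∀ (a b : ℕ) (g : H → H), Measurable g → a ≠ b →
      IndepFun (ε a) (fun ω => g (ε b ω)) μ := by
    intro a b g hg hab
    exact (hindep.indepFun hab).comp measurable_id hg
  -- integrability of inner products and their products
  have hInt2 : ∀ i j : ℕ, Integrable (fun ω => ⟪ε i ω, ε j ω⟫) μ := by
    intro i j
    refine ((hpow i 2 (by norm_num)).add (hpow j 2 (by norm_num))).mono'
      (((hmeas i).inner (hmeas j)).aestronglyMeasurable) ?_
    filter_upwards with ω
    simp only [Pi.add_apply]
    have h1 : ‖⟪ε i ω, ε j ω⟫‖ ≤ ‖ε i ω‖ * ‖ε j ω‖ := norm_inner_le_norm _ _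
    nlinarith [sq_nonneg (‖ε i ω‖ - ‖ε j ω‖), norm_nonneg (ε i ω), norm_nonneg (ε j ω)]
  have hInt4 : ∀ i j k l : ℕ,
      Integrable (fun ω => ⟪ε i ω, ε j ω⟫ * ⟪ε k ω, ε l ω⟫) μ := by
    intro i j k l
    refine (((h4 i).add (h4 j)).add ((h4 k).add (h4 l))).mono'
      ((((hmeas i).inner (hmeas j)).mul ((hmeas k).inner (hmeas l))).aestronglyMeasurable) ?_
    filter_upwards with ω
    simp only [Pi.add_apply]
    set a := ‖ε i ω‖ with ha
    set b := ‖ε j ω‖ with hb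
    set c := ‖ε k ω‖ with hc
    set d := ‖ε l ω‖ with hd
    have ha0 : 0 ≤ a := norm_nonneg _
    have hb0 : 0 ≤ b := norm_nonneg _
    have hc0 : 0 ≤ c := norm_nonneg _
    have hd0 : 0 ≤ d := norm_nonneg _
    have h1 : ‖⟪ε i ω, ε j ω⟫‖ ≤ a * b := norm_inner_le_norm _ _
    have h2 : ‖⟪ε k ω, ε l ω⟫‖ ≤ c * d := norm_inner_le_norm _ _
    have h3 : ‖⟪ε i ω, ε j ω⟫ * ⟪ε k ω, ε l ω⟫‖ ≤ (a * b) * (c * d) := by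
      rw [norm_mul]
      exact mul_le_mul h1 h2 (norm_nonneg _) (by positivity)
    refine h3.trans ?_
    nlinarith [sq_nonneg (a*b - c*d), sq_nonneg (a*a - b*b), sq_nonneg (c*c - d*d),
      mul_nonneg ha0 hb0, mul_nonneg hc0 hd0,
      mul_nonneg (mul_nonneg ha0 hb0) (mul_nonneg hc0 hd0)]
  -- squared cross moment
  have hsqid : ∀ i j : ℕ, i ≠ j →
      ∫ ω, ⟪ε i ω, ε j ω⟫ * ⟪ε i ω, ε j ω⟫ ∂μ = τ2 := by
    intro i j hij
    have hpair := pair_identDistrib hmeas hindep hident hij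
    have hg : Measurable (fun p : H × H => ⟪p.1, p.2⟫ ^ 2) :=
      (measurable_fst.inner measurable_snd).pow_const 2
    have h := (hpair.comp hg).integral_eq
    simp only [Function.comp_def] at h
    have he : (fun ω => ⟪ε i ω, ε j ω⟫ * ⟪ε i ω, ε j ω⟫)
        = fun ω => ⟪ε i ω, ε j ω⟫ ^ 2 := funext fun ω => (sq _).symm
    rw [he]
    exact h.trans hτ2.symm
  -- master fourth-moment computation
  have hm2 : ∀ i j k l : ℕ, ∫ ω, ⟪ε i ω, ε j ω⟫ * ⟪ε k ω, ε l ω⟫ ∂μ =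
      τ1^2 * ((if i = j then (1:ℝ) else 0) * (if k = l then (1:ℝ) else 0))
      + τ2 * ((if i = k then (1:ℝ) else 0) * (if j = l then (1:ℝ) else 0)
            + (if i = l then (1:ℝ) else 0) * (if j = k then (1:ℝ) else 0))
      + (τ3 - τ1^2 - 2*τ2) * ((if i = j then (1:ℝ) else 0) * (if j = k then (1:ℝ) else 0)
            * (if k = l then (1:ℝ) else 0)) := by
    intro i j k l
    by_cases hij : i = j
    · obtain rfl := hij
      by_cases hkl : k = l
      · obtain rfl := hkl
        by_cases hik : i = k
        · obtain rfl := hik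
          have hL : ∫ ω, ⟪ε i ω, ε i ω⟫ * ⟪ε i ω, ε i ω⟫ ∂μ = τ3 := by
            have he : (fun ω => ⟪ε i ω, ε i ω⟫ * ⟪ε i ω, ε i ω⟫)
                = fun ω => ‖ε i ω‖ ^ 4 := by
              funext ω
              rw [real_inner_self_eq_norm_sq]
              try ring
            rw [he]
            exact hnorm4 i
          rw [hL]
          simp
          ring_nf
        · have he : (fun ω => ⟪ε i ω, ε i ω⟫ * ⟪ε k ω, ε k ω⟫)
              = (fun ω => ‖ε i ω‖ ^ 2) * (fun ω => ‖ε k ω‖ ^ 2) := by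
            funext ω
            simp only [Pi.mul_apply]
            rw [real_inner_self_eq_norm_sq, real_inner_self_eq_norm_sq]
          have hL : ∫ ω, ⟪ε i ω, ε i ω⟫ * ⟪ε k ω, ε k ω⟫ ∂μ = τ1 * τ1 := by
            have hmul := IndepFun.integral_mul_eq_mul_integral
              (show IndepFun (fun ω => ‖ε i ω‖ ^ 2) (fun ω => ‖ε k ω‖ ^ 2) μ from
                (hindep.indepFun hik).comp (measurable_norm.pow_const 2)
                  (measurable_norm.pow_const 2))
              (hpow i 2 (by norm_num)).aestronglyMeasurable (hpow k 2 (by norm_num)).aestronglyMeasurable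
            rw [he, hmul, hnormsq i, hnormsq k]
          rw [hL]
          simp [hik, eq_comm]
          try ring
      · by_cases hik : i = k
        · obtain rfl := hik
          have he : (fun ω => ⟪ε i ω, ε i ω⟫ * ⟪ε i ω, ε l ω⟫)
              = fun ω => ⟪ε l ω, (‖ε i ω‖ ^ 2) • ε i ω⟫ := by
            funext ω
            rw [real_inner_smul_right, real_inner_self_eq_norm_sq, real_inner_comm (ε l ω)]
          rw [he, hz l (fun ω => (‖ε i ω‖ ^ 2) • ε i ω) ((((hmeas i).norm.pow_const 2).smul (hmeas i)).aemeasurable) (hW3 i)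
            (hindW1 l i (fun x => (‖x‖ ^ 2) • x)
              ((measurable_norm.pow_const 2).smul measurable_id) (fun h => hkl h.symm))]
          simp [hkl, eq_comm]
          try ring
        · by_cases hil : i = l
          · obtain rfl := hil
            have he : (fun ω => ⟪ε i ω, ε i ω⟫ * ⟪ε k ω, ε i ω⟫)
                = fun ω => ⟪ε k ω, (‖ε i ω‖ ^ 2) • ε i ω⟫ := by
              funext ω
              rw [real_inner_smul_right, real_inner_self_eq_norm_sq]
              try ring
            rw [he, hz k (fun ω => (‖ε i ω‖ ^ 2) • ε i ω) ((((hmeas i).norm.pow_const 2).smul (hmeas i)).aemeasurable) (hW3 i)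
              (hindW1 k i (fun x => (‖x‖ ^ 2) • x)
                ((measurable_norm.pow_const 2).smul measurable_id) hkl)]
            simp [hik, hkl, eq_comm]
            try ring
          · have he : (fun ω => ⟪ε i ω, ε i ω⟫ * ⟪ε k ω, ε l ω⟫)
                = fun ω => ⟪ε k ω, (‖ε i ω‖ ^ 2) • ε l ω⟫ := by
              funext ω
              rw [real_inner_smul_right, real_inner_self_eq_norm_sq]
            rw [he, hz k (fun ω => (‖ε i ω‖ ^ 2) • ε l ω) ((((hmeas i).norm.pow_const 2).smul (hmeas l)).aemeasurable)
              (hW2 i l hil)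
              (hindW2 k i l (fun p => (‖p.1‖ ^ 2) • p.2)
                ((measurable_fst.norm.pow_const 2).smul measurable_snd) hik
                (fun h => hkl h.symm))]
            simp [hik, hil, hkl, eq_comm]
            try ring
    · by_cases hkl : k = l
      · obtain rfl := hkl
        by_cases hik : i = k
        · obtain rfl := hik
          have he : (fun ω => ⟪ε i ω, ε j ω⟫ * ⟪ε i ω, ε i ω⟫)
              = fun ω => ⟪ε j ω, (‖ε i ω‖ ^ 2) • ε i ω⟫ := by
            funext ω
            rw [real_inner_smul_right, real_inner_self_eq_norm_sq,
              real_inner_comm (ε j ω)]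
            try ring
          rw [he, hz j (fun ω => (‖ε i ω‖ ^ 2) • ε i ω) ((((hmeas i).norm.pow_const 2).smul (hmeas i)).aemeasurable) (hW3 i)
            (hindW1 j i (fun x => (‖x‖ ^ 2) • x)
              ((measurable_norm.pow_const 2).smul measurable_id) (fun h => hij h.symm))]
          simp [hij, eq_comm]
          try ring
        · by_cases hjk : j = k
          · obtain rfl := hjk
            have he : (fun ω => ⟪ε i ω, ε j ω⟫ * ⟪ε j ω, ε j ω⟫)
                = fun ω => ⟪ε i ω, (‖ε j ω‖ ^ 2) • ε j ω⟫ := by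
              funext ω
              rw [real_inner_smul_right, real_inner_self_eq_norm_sq]
              try ring
            rw [he, hz i (fun ω => (‖ε j ω‖ ^ 2) • ε j ω) ((((hmeas j).norm.pow_const 2).smul (hmeas j)).aemeasurable) (hW3 j)
              (hindW1 i j (fun x => (‖x‖ ^ 2) • x)
                ((measurable_norm.pow_const 2).smul measurable_id) hij)]
            simp [hij, hik, eq_comm]
            try ring
          · have he : (fun ω => ⟪ε i ω, ε j ω⟫ * ⟪ε k ω, ε k ω⟫)
                = fun ω => ⟪ε i ω, (‖ε k ω‖ ^ 2) • ε j ω⟫ := by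
              funext ω
              rw [real_inner_smul_right, real_inner_self_eq_norm_sq]
              try ring
            rw [he, hz i (fun ω => (‖ε k ω‖ ^ 2) • ε j ω) ((((hmeas k).norm.pow_const 2).smul (hmeas j)).aemeasurable)
              (hW2 k j (fun h => hjk h.symm))
              (hindW2 i k j (fun p => (‖p.1‖ ^ 2) • p.2)
                ((measurable_fst.norm.pow_const 2).smul measurable_snd)
                (fun h => hik h.symm) (fun h => hij h.symm))]
            simp [hij, hik, hjk, eq_comm]
            try ring
      · by_cases hik : i = k
        · obtain rfl := hik
          by_cases hjl : j = l
          · obtain rfl := hjl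
            rw [hsqid i j hij]
            simp [hij, eq_comm]
            try ring
          · have he : (fun ω => ⟪ε i ω, ε j ω⟫ * ⟪ε i ω, ε l ω⟫)
                = fun ω => ⟪ε j ω, (⟪ε i ω, ε l ω⟫) • ε i ω⟫ := by
              funext ω
              rw [real_inner_smul_right, real_inner_comm (ε j ω)]
              try ring
            rw [he, hz j (fun ω => (⟪ε i ω, ε l ω⟫) • ε i ω) ((((hmeas i).inner (hmeas l)).smul (hmeas i)).aemeasurable)
              (hW1 i l hkl)
              (hindW2 j i l (fun p => (⟪p.1, p.2⟫) • p.1)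
                ((measurable_fst.inner measurable_snd).smul measurable_fst)
                hij (fun h => hjl h.symm))]
            simp [hij, hjl, hkl, eq_comm]
            try ring
        · by_cases hil : i = l
          · obtain rfl := hil
            by_cases hjk : j = k
            · obtain rfl := hjk
              have he : (fun ω => ⟪ε i ω, ε j ω⟫ * ⟪ε j ω, ε i ω⟫)
                  = fun ω => ⟪ε i ω, ε j ω⟫ * ⟪ε i ω, ε j ω⟫ := by
                funext ω
                rw [real_inner_comm (ε j ω)]
              rw [he, hsqid i j hij]
              simp [hij, hik, eq_comm]
              try ring
            · have he : (fun ω => ⟪ε i ω, ε j ω⟫ * ⟪ε k ω, ε i ω⟫)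
                  = fun ω => ⟪ε j ω, (⟪ε i ω, ε k ω⟫) • ε i ω⟫ := by
                funext ω
                rw [real_inner_smul_right, real_inner_comm (ε j ω),
                  real_inner_comm (ε i ω) (ε k ω)]
                try ring
              rw [he, hz j (fun ω => (⟪ε i ω, ε k ω⟫) • ε i ω) ((((hmeas i).inner (hmeas k)).smul (hmeas i)).aemeasurable)
                (hW1 i k hik)
                (hindW2 j i k (fun p => (⟪p.1, p.2⟫) • p.1)
                  ((measurable_fst.inner measurable_snd).smul measurable_fst)
                  hij (fun h => hjk h.symm))]
              simp [hij, hik, hjk, hkl, eq_comm]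
              try ring
          · by_cases hjk : j = k
            · obtain rfl := hjk
              have he : (fun ω => ⟪ε i ω, ε j ω⟫ * ⟪ε j ω, ε l ω⟫)
                  = fun ω => ⟪ε i ω, (⟪ε j ω, ε l ω⟫) • ε j ω⟫ := by
                funext ω
                rw [real_inner_smul_right]
                try ring
              rw [he, hz i (fun ω => (⟪ε j ω, ε l ω⟫) • ε j ω) ((((hmeas j).inner (hmeas l)).smul (hmeas j)).aemeasurable)
                (hW1 j l hkl)
                (hindW2 i j l (fun p => (⟪p.1, p.2⟫) • p.1)
                  ((measurable_fst.inner measurable_snd).smul measurable_fst)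
                  (fun h => hij h.symm) (fun h => hil h.symm))]
              simp [hij, hik, hil, hkl, eq_comm]
              try ring
            · by_cases hjl : j = l
              · obtain rfl := hjl
                have he : (fun ω => ⟪ε i ω, ε j ω⟫ * ⟪ε k ω, ε j ω⟫)
                    = fun ω => ⟪ε i ω, (⟪ε j ω, ε k ω⟫) • ε j ω⟫ := by
                  funext ω
                  rw [real_inner_smul_right, real_inner_comm (ε k ω)]
                  try ring
                rw [he, hz i (fun ω => (⟪ε j ω, ε k ω⟫) • ε j ω) ((((hmeas j).inner (hmeas k)).smul (hmeas j)).aemeasurable)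
                  (hW1 j k (fun h => hkl h.symm))
                  (hindW2 i j k (fun p => (⟪p.1, p.2⟫) • p.1)
                    ((measurable_fst.inner measurable_snd).smul measurable_fst)
                    (fun h => hij h.symm) (fun h => hik h.symm))]
                simp [hij, hik, hil, hjk, eq_comm]
                try ring
              · have hindQ : IndepFun (fun ω => ⟪ε i ω, ε j ω⟫)
                    (fun ω => ⟪ε k ω, ε l ω⟫) μ :=
                  (hindep.indepFun_prodMk_prodMk hmeas i j k l hik hil hjk hjl).comp
                    (measurable_fst.inner measurable_snd)
                    (measurable_fst.inner measurable_snd)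
                have hL : ∫ ω, ⟪ε i ω, ε j ω⟫ * ⟪ε k ω, ε l ω⟫ ∂μ
                    = (∫ ω, ⟪ε i ω, ε j ω⟫ ∂μ) * ∫ ω, ⟪ε k ω, ε l ω⟫ ∂μ :=
                  hindQ.integral_fun_mul_eq_mul_integral (hInt2 i j).aestronglyMeasurable (hInt2 k l).aestronglyMeasurable
                rw [hL, hm1 i j hij, zero_mul]
                simp [hij, hik, hil, hjk, hjl, hkl, eq_comm]
                try ring
  -- expectation of V
  have hEVterm : ∀ i j : Fin n, ∫ ω, ⟪ε i ω, ε j ω⟫ ∂μ = if i = j then τ1 else 0 := by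
    intro i j
    by_cases h : i = j
    · obtain rfl := h
      rw [if_pos rfl]
      exact hdiag i
    · rw [if_neg h]
      exact hm1 i j (fun hc => h (Fin.val_injective hc))
  have hEV : ∫ ω, V ω ∂μ = τ1 * ∑ i, P i i := by
    have h1 : ∫ ω, V ω ∂μ = ∑ i : Fin n, ∑ j : Fin n, P i j * ∫ ω, ⟪ε i ω, ε j ω⟫ ∂μ :=
      calc ∫ ω, V ω ∂μ
          = ∫ ω, ∑ i : Fin n, ∑ j : Fin n, P i j * ⟪ε i ω, ε j ω⟫ ∂μ := by simp_rw [hV]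
        _ = ∑ i : Fin n, ∫ ω, ∑ j : Fin n, P i j * ⟪ε i ω, ε j ω⟫ ∂μ :=
            integral_finset_sum _ fun i _ =>
              integrable_finset_sum _ fun j _ => (hInt2 i j).const_mul _
        _ = ∑ i : Fin n, ∑ j : Fin n, ∫ ω, P i j * ⟪ε i ω, ε j ω⟫ ∂μ :=
            Finset.sum_congr rfl fun i _ =>
              integral_finset_sum _ fun j _ => (hInt2 i j).const_mul _
        _ = ∑ i : Fin n, ∑ j : Fin n, P i j * ∫ ω, ⟪ε i ω, ε j ω⟫ ∂μ :=
            Finset.sum_congr rfl fun i _ => Finset.sum_congr rfl fun j _ =>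
              integral_const_mul _ _
    rw [h1]
    simp_rw [hEVterm, mul_ite, mul_zero]
    simp only [Finset.sum_ite_eq, Finset.mem_univ, if_true]
    rw [Finset.mul_sum]
    exact Finset.sum_congr rfl fun i _ => mul_comm _ _
  -- second moment of V
  have hVsq : ∀ ω, V ω ^ 2 = ∑ i : Fin n, ∑ j : Fin n, ∑ k : Fin n, ∑ l : Fin n,
      (P i j * P k l) * (⟪ε i ω, ε j ω⟫ * ⟪ε k ω, ε l ω⟫) := by
    intro ω
    rw [hV, sq, Finset.sum_mul_sum]
    refine Finset.sum_congr rfl fun i _ => ?_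
    calc ∑ k : Fin n, ((∑ j : Fin n, P i j * ⟪ε i ω, ε j ω⟫)
            * ∑ l : Fin n, P k l * ⟪ε k ω, ε l ω⟫)
        = ∑ k : Fin n, ∑ j : Fin n, (P i j * ⟪ε i ω, ε j ω⟫)
            * ∑ l : Fin n, P k l * ⟪ε k ω, ε l ω⟫ :=
          Finset.sum_congr rfl fun k _ => Finset.sum_mul _ _ _
      _ = ∑ j : Fin n, ∑ k : Fin n, (P i j * ⟪ε i ω, ε j ω⟫)
            * ∑ l : Fin n, P k l * ⟪ε k ω, ε l ω⟫ := by rw [Finset.sum_comm]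
      _ = ∑ j : Fin n, ∑ k : Fin n, ∑ l : Fin n,
            (P i j * P k l) * (⟪ε i ω, ε j ω⟫ * ⟪ε k ω, ε l ω⟫) := by
          refine Finset.sum_congr rfl fun j _ => Finset.sum_congr rfl fun k _ => ?_
          rw [Finset.mul_sum]
          exact Finset.sum_congr rfl fun l _ => by ring
  have hEV2 : ∫ ω, V ω ^ 2 ∂μ = ∑ i : Fin n, ∑ j : Fin n, ∑ k : Fin n, ∑ l : Fin n,
      P i j * P k l *
      (τ1^2 * ((if i = j then (1:ℝ) else 0) * (if k = l then (1:ℝ) else 0))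
        + τ2 * ((if i = k then (1:ℝ) else 0) * (if j = l then (1:ℝ) else 0)
              + (if i = l then (1:ℝ) else 0) * (if j = k then (1:ℝ) else 0))
        + (τ3 - τ1^2 - 2*τ2) * ((if i = j then (1:ℝ) else 0) * (if j = k then (1:ℝ) else 0)
              * (if k = l then (1:ℝ) else 0))) := by
    have h1 : ∫ ω, V ω ^ 2 ∂μ
        = ∫ ω, ∑ i : Fin n, ∑ j : Fin n, ∑ k : Fin n, ∑ l : Fin n,
            (P i j * P k l) * (⟪ε i ω, ε j ω⟫ * ⟪ε k ω, ε l ω⟫) ∂μ := by simp_rw [hVsq]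
    rw [h1]
    have h2 : ∫ ω, ∑ i : Fin n, ∑ j : Fin n, ∑ k : Fin n, ∑ l : Fin n,
          (P i j * P k l) * (⟪ε i ω, ε j ω⟫ * ⟪ε k ω, ε l ω⟫) ∂μ
        = ∑ i : Fin n, ∑ j : Fin n, ∑ k : Fin n, ∑ l : Fin n,
          (P i j * P k l) * ∫ ω, ⟪ε i ω, ε j ω⟫ * ⟪ε k ω, ε l ω⟫ ∂μ :=
      calc ∫ ω, ∑ i : Fin n, ∑ j : Fin n, ∑ k : Fin n, ∑ l : Fin n,
            (P i j * P k l) * (⟪ε i ω, ε j ω⟫ * ⟪ε k ω, ε l ω⟫) ∂μ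
          = ∑ i : Fin n, ∫ ω, ∑ j : Fin n, ∑ k : Fin n, ∑ l : Fin n,
            (P i j * P k l) * (⟪ε i ω, ε j ω⟫ * ⟪ε k ω, ε l ω⟫) ∂μ :=
            integral_finset_sum _ fun i _ => integrable_finset_sum _ fun j _ =>
              integrable_finset_sum _ fun k _ => integrable_finset_sum _ fun l _ =>
                (hInt4 _ _ _ _).const_mul _
        _ = ∑ i : Fin n, ∑ j : Fin n, ∫ ω, ∑ k : Fin n, ∑ l : Fin n,
            (P i j * P k l) * (⟪ε i ω, ε j ω⟫ * ⟪ε k ω, ε l ω⟫) ∂μ :=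
            Finset.sum_congr rfl fun i _ =>
              integral_finset_sum _ fun j _ => integrable_finset_sum _ fun k _ =>
                integrable_finset_sum _ fun l _ => (hInt4 _ _ _ _).const_mul _
        _ = ∑ i : Fin n, ∑ j : Fin n, ∑ k : Fin n, ∫ ω, ∑ l : Fin n,
            (P i j * P k l) * (⟪ε i ω, ε j ω⟫ * ⟪ε k ω, ε l ω⟫) ∂μ :=
            Finset.sum_congr rfl fun i _ => Finset.sum_congr rfl fun j _ =>
              integral_finset_sum _ fun k _ =>
                integrable_finset_sum _ fun l _ => (hInt4 _ _ _ _).const_mul _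
        _ = ∑ i : Fin n, ∑ j : Fin n, ∑ k : Fin n, ∑ l : Fin n, ∫ ω,
            (P i j * P k l) * (⟪ε i ω, ε j ω⟫ * ⟪ε k ω, ε l ω⟫) ∂μ :=
            Finset.sum_congr rfl fun i _ => Finset.sum_congr rfl fun j _ =>
              Finset.sum_congr rfl fun k _ =>
                integral_finset_sum _ fun l _ => (hInt4 _ _ _ _).const_mul _
        _ = ∑ i : Fin n, ∑ j : Fin n, ∑ k : Fin n, ∑ l : Fin n,
            (P i j * P k l) * ∫ ω, ⟪ε i ω, ε j ω⟫ * ⟪ε k ω, ε l ω⟫ ∂μ :=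
            Finset.sum_congr rfl fun i _ => Finset.sum_congr rfl fun j _ =>
              Finset.sum_congr rfl fun k _ => Finset.sum_congr rfl fun l _ =>
                integral_const_mul _ _
    rw [h2]
    refine Finset.sum_congr rfl fun i _ => Finset.sum_congr rfl fun j _ =>
      Finset.sum_congr rfl fun k _ => Finset.sum_congr rfl fun l _ => ?_
    rw [hm2 (i : ℕ) (j : ℕ) (k : ℕ) (l : ℕ)]
    simp only [Fin.val_eq_val]
  rw [hEV2, hEV]
  exact alg_step P τ1 τ2 τ3
end

section
/- Let r_1, …, r_{n+1} be i.i.d. real-valued random variables on a probability space, and for k ∈ {1, …, n} let r_{(k)} denote the k-th smallest value among r_1, …, r_n. Then P( r_{n+1} ≤ r_{(k)} ) ≥ k/(n+1). -/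
open MeasureTheory ProbabilityTheory

open List in
theorem countP_char {l : List ℝ} (hs : l.Pairwise (· ≤ ·)) {p : ℝ → Bool}
    (hp : ∀ a b : ℝ, a ≤ b → p b → p a) {j : ℕ} (hj : j < l.length) :
    p l[j] ↔ j < l.countP p := by
  constructor
  · intro hpj
    have h1 : (l.take (j+1)).countP p = j + 1 := by
      rw [List.countP_eq_length.2, List.length_take]
      · omega
      · intro a ha
        obtain ⟨i, hi, rfl⟩ := List.mem_take_iff_getElem.1 ha
        have hle : l[i] ≤ l[j] := by
          rcases eq_or_lt_of_le (show i ≤ j by omega) with h | h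
          · subst h; rfl
          · exact hs.rel_get_of_lt (by simpa using h)
        exact hp _ _ hle hpj
    calc j < j + 1 := Nat.lt_succ_self j
      _ = (l.take (j+1)).countP p := h1.symm
      _ ≤ l.countP p := (List.take_sublist _ _).countP_le
  · intro hcount
    by_contra hpj
    have hsplit : l.countP p = (l.take j).countP p + (l.drop j).countP p := by
      rw [← List.countP_append, List.take_append_drop]
    have h2 : (l.drop j).countP p = 0 := by
      rw [List.countP_eq_zero]
      intro a ha
      obtain ⟨i, hi, rfl⟩ := List.mem_iff_getElem.1 ha
      have hji : j + i < l.length := by simp at hi; omega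
      rw [List.getElem_drop]
      intro hpa
      have hle : l[j] ≤ l[j + i] := by
        rcases Nat.eq_zero_or_pos i with h | h
        · subst h; rfl
        · exact hs.rel_get_of_lt (by simp [Fin.lt_def]; omega)
      exact hpj (hp _ _ hle hpa)
    have h3 : (l.take j).countP p ≤ j := le_trans List.countP_le_length (by simp)
    omega



/-- The `k`-th smallest value (`k` zero-indexed) among `v 0, …, v (n-1)`. -/
noncomputable def kthSmallest {n : ℕ} (v : Fin n → ℝ) (k : Fin n) : ℝ :=
  (Multiset.sort (Multiset.ofList (List.ofFn v)) (· ≤ ·)).get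
    (k.cast (by simp [Multiset.length_sort]))

theorem sort_ofFn_perm {n : ℕ} (v : Fin n → ℝ) :
    (Multiset.sort (Multiset.ofList (List.ofFn v)) (· ≤ ·)).Perm (List.ofFn v) :=
  Multiset.coe_eq_coe.1 (Multiset.sort_eq _ _)

theorem length_sort_ofFn {n : ℕ} (v : Fin n → ℝ) :
    (Multiset.sort (Multiset.ofList (List.ofFn v)) (· ≤ ·)).length = n :=
  (sort_ofFn_perm v).length_eq.trans List.length_ofFn

theorem kthSmallest_le_iff {n : ℕ} (v : Fin n → ℝ) (k : Fin n) (c : ℝ) :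
    kthSmallest v k ≤ c ↔ (k : ℕ) < (List.ofFn v).countP (fun a => decide (a ≤ c)) := by
  have hs := Multiset.pairwise_sort (Multiset.ofList (List.ofFn v)) (· ≤ ·)
  have hj : (k : ℕ) < (Multiset.sort (Multiset.ofList (List.ofFn v)) (· ≤ ·)).length := by
    rw [length_sort_ofFn]; exact k.2
  have := countP_char hs (p := fun a => decide (a ≤ c))
    (fun a b hab hb => by simp_all; exact le_trans hab hb) hj
  rw [(sort_ofFn_perm v).countP_eq (fun a => decide (a ≤ c))] at this
  simp only [decide_eq_true_eq] at this
  simpa only [kthSmallest, List.get_eq_getElem, Fin.coe_cast] using this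

theorem le_kthSmallest_iff {n : ℕ} (v : Fin n → ℝ) (k : Fin n) (c : ℝ) :
    c ≤ kthSmallest v k ↔ (List.ofFn v).countP (fun a => decide (a < c)) ≤ (k : ℕ) := by
  have hs := Multiset.pairwise_sort (Multiset.ofList (List.ofFn v)) (· ≤ ·)
  have hj : (k : ℕ) < (Multiset.sort (Multiset.ofList (List.ofFn v)) (· ≤ ·)).length := by
    rw [length_sort_ofFn]; exact k.2
  have := countP_char hs (p := fun a => decide (a < c))
    (fun a b hab hb => by simp_all; exact lt_of_le_of_lt hab hb) hj
  rw [(sort_ofFn_perm v).countP_eq (fun a => decide (a < c))] at this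
  simp only [decide_eq_true_eq] at this
  rw [← not_lt, ← Nat.not_lt]
  exact not_congr (by simpa only [kthSmallest, List.get_eq_getElem, Fin.coe_cast] using this)
theorem countP_ofFn {m : ℕ} (v : Fin m → ℝ) (p : ℝ → Prop) [DecidablePred p] :
    (List.ofFn v).countP (fun a => decide (p a)) = (Finset.univ.filter (fun i => p (v i))).card := by
  rw [← Multiset.coe_countP, ← Fin.univ_val_map, Multiset.countP_map, Finset.card,
    Finset.filter_val]

theorem measurable_kthSmallest {n : ℕ} (k : Fin n) :
    Measurable fun v : Fin n → ℝ => kthSmallest v k := by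
  apply measurable_of_Iio
  intro c
  have hset : (fun v : Fin n → ℝ => kthSmallest v k) ⁻¹' Set.Iio c =
      ⋃ S ∈ Finset.univ.powersetCard ((k : ℕ) + 1), ⋂ i ∈ S, {v : Fin n → ℝ | v i < c} := by
    ext v
    simp only [Set.mem_preimage, Set.mem_Iio, Set.mem_iUnion, Set.mem_iInter, Set.mem_setOf_eq,
      Finset.mem_powersetCard]
    constructor
    · intro hv
      have h1 : (k : ℕ) < (List.ofFn v).countP (fun a => decide (a < c)) := by
        by_contra h
        exact absurd ((le_kthSmallest_iff v k c).2 (not_lt.1 h)) (not_le.2 hv)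
      rw [countP_ofFn v (· < c)] at h1
      obtain ⟨S, hS, hcard⟩ := Finset.exists_subset_card_eq (n := (k : ℕ) + 1) h1
      exact ⟨S, ⟨⟨S.subset_univ, hcard⟩, fun i hi => (Finset.mem_filter.1 (hS hi)).2⟩⟩
    · rintro ⟨S, ⟨⟨-, hcard⟩, hall⟩⟩
      by_contra h
      have h2 := (le_kthSmallest_iff v k c).1 (not_lt.1 h)
      rw [countP_ofFn v (· < c)] at h2
      have hsub : S ⊆ Finset.univ.filter (fun i => v i < c) :=
        fun i hi => Finset.mem_filter.2 ⟨Finset.mem_univ i, hall i hi⟩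
      have := Finset.card_le_card hsub
      omega
  rw [hset]
  exact MeasurableSet.biUnion (Finset.countable_toSet _)
    (fun S _ => MeasurableSet.biInter S.countable_toSet
      (fun i _ => measurableSet_lt (measurable_pi_apply i) measurable_const))

theorem det_count {n : ℕ} (x : Fin (n + 1) → ℝ) (k : ℕ) (hk1 : 1 ≤ k) (hk2 : k ≤ n) :
    k ≤ (Finset.univ.filter (fun j : Fin (n + 1) =>
      x j ≤ kthSmallest (fun i : Fin n => x (Equiv.swap j (Fin.last n) i.castSucc))
        ⟨k - 1, lt_of_lt_of_le (Nat.sub_lt hk1 Nat.one_pos) hk2⟩)).card := by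
  set c : ℝ := kthSmallest x ⟨k - 1, by omega⟩ with hc
  have hstep1 : k ≤ (Finset.univ.filter (fun j : Fin (n + 1) => x j ≤ c)).card := by
    have := (kthSmallest_le_iff x ⟨k - 1, by omega⟩ c).1 (le_refl c)
    rw [countP_ofFn x (· ≤ c)] at this
    have h0 : k - 1 < (Finset.univ.filter (fun j : Fin (n + 1) => x j ≤ c)).card := this
    omega
  have hcc : (List.ofFn x).countP (fun a => decide (a < c)) ≤ k - 1 :=
    (le_kthSmallest_iff x ⟨k - 1, by omega⟩ c).1 (le_refl c)
  refine le_trans hstep1 (Finset.card_le_card ?_)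
  intro j hj
  rw [Finset.mem_filter] at hj ⊢
  refine ⟨Finset.mem_univ j, ?_⟩
  have hxj : x j ≤ c := hj.2
  set σ := Equiv.swap j (Fin.last n) with hσ
  rw [le_kthSmallest_iff]
  show (List.ofFn fun i : Fin n => (x ∘ σ) i.castSucc).countP (fun a => decide (a < x j)) ≤ k - 1
  have hconcat : List.ofFn (x ∘ σ) =
      (List.ofFn fun i : Fin n => (x ∘ σ) i.castSucc).concat ((x ∘ σ) (Fin.last n)) :=
    List.ofFn_succ' (x ∘ σ)
  have h1 : (List.ofFn fun i : Fin n => (x ∘ σ) i.castSucc).countP (fun a => decide (a < x j))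
      ≤ (List.ofFn (x ∘ σ)).countP (fun a => decide (a < x j)) := by
    rw [hconcat, List.concat_eq_append, List.countP_append]
    omega
  have h2 : (List.ofFn (x ∘ σ)).countP (fun a => decide (a < x j))
      = (List.ofFn x).countP (fun a => decide (a < x j)) :=
    (σ.ofFn_comp_perm x).countP_eq _
  have h3 : (List.ofFn x).countP (fun a => decide (a < x j))
      ≤ (List.ofFn x).countP (fun a => decide (a < c)) :=
    List.countP_mono_left (fun a _ ha => by simp_all; linarith)
  omega

open MeasureTheory ProbabilityTheory

theorem joint_eq_pi {Ω : Type*} [MeasurableSpace Ω] (μ : Measure Ω) [IsProbabilityMeasure μ]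
    {m : ℕ} (r : Fin m → Ω → ℝ) (hmeas : ∀ i, Measurable (r i))
    (hindep : iIndepFun r μ) :
    μ.map (fun ω i => r i ω) = Measure.pi (fun i => μ.map (r i)) := by
  have hrvec : Measurable (fun ω (i : Fin m) => r i ω) := measurable_pi_lambda _ hmeas
  haveI : ∀ i, IsProbabilityMeasure (μ.map (r i)) :=
    fun i => Measure.isProbabilityMeasure_map (hmeas i).aemeasurable
  refine (Measure.pi_eq (μ := fun i => μ.map (r i)) fun s hs => ?_).symm
  rw [Measure.map_apply hrvec (MeasurableSet.univ_pi hs)]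
  have hpre : (fun ω (i : Fin m) => r i ω) ⁻¹' Set.pi Set.univ s = ⋂ i, r i ⁻¹' s i := by
    ext ω; simp [Set.mem_pi]
  rw [hpre]
  have h := (iIndepFun_iff_measure_inter_preimage_eq_mul.1 hindep) Finset.univ
    (sets := s) (fun i _ => hs i)
  simp only [Finset.mem_univ, Set.iInter_true] at h
  rw [h]
  exact Finset.prod_congr rfl fun i _ => (Measure.map_apply (hmeas i) (hs i)).symm

/-- Split-conformal coverage bound: for i.i.d. real random variables `r 0, …, r n`
(that is, `n + 1` of them), and `1 ≤ k ≤ n`, the probability that the last one is at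
most the `k`-th smallest of the first `n` is at least `k/(n+1)`. -/
theorem split_conformal_coverage
    {Ω : Type*} [MeasurableSpace Ω] (μ : Measure Ω) [IsProbabilityMeasure μ]
    (n : ℕ) (hn : 1 ≤ n) (r : Fin (n + 1) → Ω → ℝ)
    (hmeas : ∀ i, Measurable (r i))
    (hindep : iIndepFun r μ)
    (hident : ∀ i j, IdentDistrib (r i) (r j) μ μ)
    (k : ℕ) (hk1 : 1 ≤ k) (hk2 : k ≤ n) :
    ENNReal.ofReal ((k : ℝ) / (n + 1)) ≤
      μ {ω | r (Fin.last n) ω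
          ≤ kthSmallest (fun i : Fin n => r i.castSucc ω) ⟨k - 1, by omega⟩} := by
  classical
  set ν : Measure ℝ := μ.map (r (Fin.last n)) with hν
  haveI : IsProbabilityMeasure ν := Measure.isProbabilityMeasure_map (hmeas _).aemeasurable
  have hjoint : μ.map (fun ω i => r i ω) = Measure.pi (fun _ : Fin (n + 1) => ν) := by
    rw [joint_eq_pi μ r hmeas hindep]
    congr 1
    funext i
    exact (hident i (Fin.last n)).map_eq
  set E : Set (Fin (n + 1) → ℝ) :=
    {x | x (Fin.last n) ≤ kthSmallest (fun i : Fin n => x i.castSucc) ⟨k - 1, by omega⟩}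
    with hE
  have hEmeas : MeasurableSet E := by
    apply measurableSet_le (measurable_pi_apply _)
    exact (measurable_kthSmallest _).comp
      (measurable_pi_lambda _ (fun i => measurable_pi_apply _))
  have hrvec : Measurable fun ω (i : Fin (n + 1)) => r i ω := measurable_pi_lambda _ hmeas
  -- each permuted event has the same probability
  have key : ∀ σ : Equiv.Perm (Fin (n + 1)),
      μ ((fun ω (i : Fin (n + 1)) => r (σ i) ω) ⁻¹' E)
        = Measure.pi (fun _ : Fin (n + 1) => ν) E := by
    intro σ
    have hg : Measurable fun x : Fin (n + 1) → ℝ => fun i => x (σ i) :=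
      measurable_pi_lambda _ (fun i => measurable_pi_apply _)
    have hgeq : (fun x : Fin (n + 1) → ℝ => fun i => x (σ i))
        = MeasurableEquiv.piCongrLeft (fun _ => ℝ) σ.symm := by
      funext x
      funext j
      have h := MeasurableEquiv.piCongrLeft_apply_apply (β := fun _ : Fin (n + 1) => ℝ) σ.symm x (σ j)
      simpa using h.symm
    have hcomp : (fun ω (i : Fin (n + 1)) => r (σ i) ω)
        = (fun x : Fin (n + 1) → ℝ => fun i => x (σ i)) ∘ (fun ω i => r i ω) := rfl
    rw [← Measure.map_apply (by rw [hcomp]; exact hg.comp hrvec) hEmeas, hcomp,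
      ← Measure.map_map hg hrvec, hjoint, hgeq,
      (measurePreserving_piCongrLeft (fun _ : Fin (n + 1) => ν) σ.symm).map_eq]
  set A : Fin (n + 1) → Set Ω :=
    fun j => (fun ω (i : Fin (n + 1)) => r (Equiv.swap j (Fin.last n) i) ω) ⁻¹' E with hA
  have hAmeas : ∀ j, MeasurableSet (A j) := by
    intro j
    exact (measurable_pi_lambda _ (fun i => hmeas _)) hEmeas
  have hAkey : ∀ j, μ (A j) = Measure.pi (fun _ : Fin (n + 1) => ν) E :=
    fun j => key (Equiv.swap j (Fin.last n))
  -- pointwise counting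
  have hcard : ∀ ω, k ≤ (Finset.univ.filter (fun j => ω ∈ A j)).card := by
    intro ω
    refine le_trans (det_count (fun i => r i ω) k hk1 hk2) (le_of_eq ?_)
    apply congrArg
    apply Finset.filter_congr
    intro j _
    simp only [hA, Set.mem_preimage, hE, Set.mem_setOf_eq, Equiv.swap_apply_right]
  -- sum of indicator bound
  have hsum : (k : ENNReal) ≤ ∑ j, μ (A j) := by
    have hpt : ∀ ω, (k : ENNReal) ≤ ∑ j, (A j).indicator (fun _ => (1 : ENNReal)) ω := by
      intro ω
      calc (k : ENNReal) ≤ ((Finset.univ.filter (fun j => ω ∈ A j)).card : ENNReal) := by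
            exact_mod_cast hcard ω
        _ = ∑ j, (A j).indicator (fun _ => (1 : ENNReal)) ω := by
            rw [Finset.card_filter]
            push_cast
            exact Finset.sum_congr rfl fun j _ => by simp [Set.indicator_apply]
    calc (k : ENNReal) = ∫⁻ _, (k : ENNReal) ∂μ := by simp
      _ ≤ ∫⁻ ω, ∑ j, (A j).indicator (fun _ => (1 : ENNReal)) ω ∂μ := lintegral_mono hpt
      _ = ∑ j, ∫⁻ ω, (A j).indicator (fun _ => (1 : ENNReal)) ω ∂μ :=
          lintegral_finset_sum _ (fun j _ => measurable_const.indicator (hAmeas j))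
      _ = ∑ j, μ (A j) := by
          refine Finset.sum_congr rfl fun j _ => ?_
          exact lintegral_indicator_one (μ := μ) (hAmeas j)
  have hbound : (k : ENNReal) ≤ (n + 1) * Measure.pi (fun _ : Fin (n + 1) => ν) E := by
    calc (k : ENNReal) ≤ ∑ j, μ (A j) := hsum
      _ = (n + 1) * Measure.pi (fun _ : Fin (n + 1) => ν) E := by
          rw [Finset.sum_congr rfl fun j _ => hAkey j]
          simp [Finset.card_univ, mul_comm]
  -- identify the target set
  have htarget : {ω | r (Fin.last n) ω
      ≤ kthSmallest (fun i : Fin n => r i.castSucc ω) ⟨k - 1, by omega⟩} = A (Fin.last n) := by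
    ext ω
    simp [hA, hE, Equiv.swap_self]
  rw [htarget, hAkey (Fin.last n)]
  have hofReal : ENNReal.ofReal ((k : ℝ) / (n + 1)) = (k : ENNReal) / ((n : ENNReal) + 1) := by
    rw [ENNReal.ofReal_div_of_pos (by positivity), ENNReal.ofReal_natCast,
      show ((n : ℝ) + 1) = ((n + 1 : ℕ) : ℝ) by push_cast; ring, ENNReal.ofReal_natCast]
    norm_cast
  rw [hofReal, ENNReal.div_le_iff_le_mul (Or.inl (by simp)) (Or.inl (by simp))]
  calc (k : ENNReal) ≤ (n + 1) * Measure.pi (fun _ : Fin (n + 1) => ν) E := hbound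
    _ = Measure.pi (fun _ : Fin (n + 1) => ν) E * ((n : ENNReal) + 1) := by ring
end
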